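/- (GP-UCB exploration term is dominated by the epistemic value.) Let m ∈ ℝ, let v > 0 be the observation-noise variance, and let v_t be the posterior variance at a query point with 0 < v_t ≤ 1. Set β := (1/2) · log(1 + 1/v). Then β · v_t ≤ ∫ D_KL( N(f, v) ‖ N(m, v_t + v) ) d(N(m, v_t))(f); that is, the square of the GP-UCB exploration bonus β^{1/2} σ_t(x) (with σ_t(x)² = v_t) is bounded above by the mutual information I(f_x; y | D_t) between the latent value and the observation. -/

import Mathlib

open MeasureTheory Real ProbabilityTheory
open scoped ENNReal NNReal

open scoped Classical in
/-- The Kullback–Leibler divergence of a measure `μ` from a measure `ν`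
(in `ℝ≥0∞`, infinite unless `μ ≪ ν` and the log-likelihood ratio is
integrable). -/
noncomputable def klDiv {α : Type*} [MeasurableSpace α]
    (μ ν : Measure α) : ℝ≥0∞ :=
  if μ ≪ ν ∧ Integrable (llr μ ν) μ
  then ENNReal.ofReal (∫ x, llr μ ν x ∂μ) else ⊤

open Filter


lemma tendsto_sq_atBot_atTop : Tendsto (fun x : ℝ => x ^ 2) atBot atTop := by
  have h := (tendsto_pow_atTop (two_ne_zero)).comp tendsto_neg_atBot_atTop (α := ℝ)
  simpa [Function.comp_def] using h

lemma tendsto_neg_mul_sq_atTop {b : ℝ} (hb : 0 < b) :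
    Tendsto (fun x : ℝ => -b * x ^ 2) atTop atBot := by
  have h2 : Tendsto (fun x : ℝ => x ^ 2) atTop atTop := tendsto_pow_atTop two_ne_zero
  simpa [neg_mul, Function.comp_def] using tendsto_neg_atTop_atBot.comp (h2.const_mul_atTop hb)

lemma tendsto_neg_mul_sq_atBot {b : ℝ} (hb : 0 < b) :
    Tendsto (fun x : ℝ => -b * x ^ 2) atBot atBot := by
  simpa [neg_mul, Function.comp_def] using tendsto_neg_atTop_atBot.comp (tendsto_sq_atBot_atTop.const_mul_atTop hb)

lemma tendsto_exp_neg_mul_sq_atTop {b : ℝ} (hb : 0 < b) :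
    Tendsto (fun x : ℝ => rexp (-b * x ^ 2)) atTop (nhds 0) :=
  Real.tendsto_exp_atBot.comp (tendsto_neg_mul_sq_atTop hb)

lemma tendsto_exp_neg_mul_sq_atBot {b : ℝ} (hb : 0 < b) :
    Tendsto (fun x : ℝ => rexp (-b * x ^ 2)) atBot (nhds 0) :=
  Real.tendsto_exp_atBot.comp (tendsto_neg_mul_sq_atBot hb)

lemma integrable_sq_mul_exp_neg_mul_sq {b : ℝ} (hb : 0 < b) :
    Integrable (fun x : ℝ => x ^ 2 * rexp (-b * x ^ 2)) := by
  have := integrable_rpow_mul_exp_neg_mul_sq hb (s := 2) (by norm_num)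
  simpa [Real.rpow_two] using this

lemma integral_mul_exp_neg_mul_sq_real {b : ℝ} (hb : 0 < b) :
    ∫ x : ℝ, x * rexp (-b * x ^ 2) = 0 := by
  have hderiv : ∀ x : ℝ, HasDerivAt (fun x : ℝ => -(2 * b)⁻¹ * rexp (-b * x ^ 2))
      (x * rexp (-b * x ^ 2)) x := by
    intro x
    have h1 : HasDerivAt (fun x : ℝ => -b * x ^ 2) (-b * (2 * x)) x := by
      simpa using ((hasDerivAt_pow 2 x).const_mul (-b))
    have h2 := (h1.exp).const_mul (-(2 * b)⁻¹)
    refine h2.congr_deriv ?_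
    have hb0 : (2 * b) ≠ 0 := by positivity
    linear_combination (x * rexp (-b * x ^ 2)) * inv_mul_cancel₀ hb0
  have h := integral_of_hasDerivAt_of_tendsto hderiv (integrable_mul_exp_neg_mul_sq hb)
    (by simpa using (tendsto_exp_neg_mul_sq_atBot hb).const_mul (-(2*b)⁻¹))
    (by simpa using (tendsto_exp_neg_mul_sq_atTop hb).const_mul (-(2*b)⁻¹))
  simpa using h

lemma tendsto_mul_exp_neg_mul_sq_atTop {b : ℝ} (hb : 0 < b) :
    Tendsto (fun x : ℝ => x * rexp (-b * x ^ 2)) atTop (nhds 0) := by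
  have h1 := tendsto_rpow_mul_exp_neg_mul_atTop_nhds_zero (1/2 : ℝ) b hb
  have h2 : Tendsto (fun x : ℝ => x ^ 2) atTop atTop := tendsto_pow_atTop two_ne_zero
  have h3 := h1.comp h2
  apply h3.congr'
  filter_upwards [eventually_ge_atTop (0:ℝ)] with x hx
  simp only [Function.comp_def]
  rw [← Real.rpow_natCast x 2, ← Real.rpow_mul hx]
  norm_num

lemma tendsto_mul_exp_neg_mul_sq_atBot {b : ℝ} (hb : 0 < b) :
    Tendsto (fun x : ℝ => x * rexp (-b * x ^ 2)) atBot (nhds 0) := by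
  have h := (tendsto_mul_exp_neg_mul_sq_atTop hb).comp tendsto_neg_atBot_atTop (α := ℝ)
  have h2 := h.neg
  simp only [Function.comp_def, neg_neg, neg_zero, neg_mul, neg_sq] at h2 ⊢
  simpa using h2

lemma integral_sq_mul_exp_neg_mul_sq {b : ℝ} (hb : 0 < b) :
    ∫ x : ℝ, x ^ 2 * rexp (-b * x ^ 2) = √(π / b) / (2 * b) := by
  have hderiv : ∀ x : ℝ, HasDerivAt (fun x : ℝ => x * rexp (-b * x ^ 2))
      (rexp (-b * x ^ 2) - 2 * b * (x ^ 2 * rexp (-b * x ^ 2))) x := by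
    intro x
    have h1 : HasDerivAt (fun x : ℝ => -b * x ^ 2) (-b * (2 * x)) x := by
      simpa using ((hasDerivAt_pow 2 x).const_mul (-b))
    have h2 := (hasDerivAt_id x).mul h1.exp
    refine h2.congr_deriv ?_
    simp only [id]
    ring
  have hint : Integrable (fun x : ℝ => rexp (-b * x ^ 2) - 2 * b * (x ^ 2 * rexp (-b * x ^ 2))) :=
    (integrable_exp_neg_mul_sq hb).sub ((integrable_sq_mul_exp_neg_mul_sq hb).const_mul _)
  have h := integral_of_hasDerivAt_of_tendsto hderiv hint
    (tendsto_mul_exp_neg_mul_sq_atBot hb) (tendsto_mul_exp_neg_mul_sq_atTop hb)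
  rw [integral_sub (integrable_exp_neg_mul_sq hb)
      ((integrable_sq_mul_exp_neg_mul_sq hb).const_mul _), integral_gaussian,
      integral_const_mul, sub_zero] at h
  have hb' : (2 : ℝ) * b ≠ 0 := by positivity
  field_simp at h ⊢
  linarith

open ProbabilityTheory

section Gauss

variable {μ : ℝ} {v : ℝ≥0}

lemma gaussian_integral_eq (hv : v ≠ 0) (g : ℝ → ℝ) :
    ∫ x, g x ∂(gaussianReal μ v) = ∫ x, gaussianPDFReal μ v x * g x := by
  rw [gaussianReal_of_var_ne_zero _ hv]
  have hm : Measurable fun x => (gaussianPDFReal μ v x).toNNReal :=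
    (measurable_gaussianPDFReal μ v).real_toNNReal
  have : (gaussianPDF μ v) = fun x => ((gaussianPDFReal μ v x).toNNReal : ℝ≥0∞) := by
    ext x; rfl
  rw [this, integral_withDensity_eq_integral_smul hm]
  congr 1 with x
  simp [NNReal.smul_def, Real.coe_toNNReal _ (gaussianPDFReal_nonneg μ v x)]

lemma gaussian_integrable_iff (hv : v ≠ 0) {g : ℝ → ℝ} :
    Integrable g (gaussianReal μ v) ↔
      Integrable (fun x => gaussianPDFReal μ v x * g x) volume := by
  rw [gaussianReal_of_var_ne_zero _ hv]
  have hm : Measurable fun x => (gaussianPDFReal μ v x).toNNReal :=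
    (measurable_gaussianPDFReal μ v).real_toNNReal
  have : (gaussianPDF μ v) = fun x => ((gaussianPDFReal μ v x).toNNReal : ℝ≥0∞) := by
    ext x; rfl
  rw [this, integrable_withDensity_iff_integrable_smul hm]
  constructor <;> intro h <;> refine h.congr ?_ <;> filter_upwards with x <;>
    simp [NNReal.smul_def, Real.coe_toNNReal _ (gaussianPDFReal_nonneg μ v x), mul_comm]

lemma gaussianPDFReal_eq (hv : v ≠ 0) (x : ℝ) :
    gaussianPDFReal μ v x = (√(2 * π * v))⁻¹ * rexp (-(2 * (v:ℝ))⁻¹ * ((x - μ) ^ 2)) := by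
  have hv' : (0:ℝ) < v := lt_of_le_of_ne v.coe_nonneg (by exact_mod_cast hv.symm)
  rw [gaussianPDFReal]
  congr 1
  rw [neg_div, div_eq_inv_mul, neg_mul]

end Gauss

section Moments

variable {μ : ℝ} {v : ℝ≥0}

lemma gaussian_pdf_mul_sq_eq (hv : v ≠ 0) (c : ℝ) :
    (fun x => gaussianPDFReal μ v x * (x - c) ^ 2) =
      fun x =>
        (√(2 * π * v))⁻¹ *
          ((x - μ) ^ 2 * rexp (-(2 * (v:ℝ))⁻¹ * (x - μ) ^ 2) +
            2 * (μ - c) * ((x - μ) * rexp (-(2 * (v:ℝ))⁻¹ * (x - μ) ^ 2)) +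
            (μ - c) ^ 2 * rexp (-(2 * (v:ℝ))⁻¹ * (x - μ) ^ 2)) := by
  funext x
  rw [gaussianPDFReal_eq hv]
  ring

lemma integrable_gaussian_sub_sq (hv : v ≠ 0) (c : ℝ) :
    Integrable (fun x => (x - c) ^ 2) (gaussianReal μ v) := by
  have hv' : (0:ℝ) < v := lt_of_le_of_ne v.coe_nonneg (by exact_mod_cast hv.symm)
  have hb : (0:ℝ) < (2 * (v:ℝ))⁻¹ := by positivity
  rw [gaussian_integrable_iff hv, gaussian_pdf_mul_sq_eq hv c]
  have hint : Integrable (fun y : ℝ =>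
      y ^ 2 * rexp (-(2 * (v:ℝ))⁻¹ * y ^ 2) +
        2 * (μ - c) * (y * rexp (-(2 * (v:ℝ))⁻¹ * y ^ 2)) +
        (μ - c) ^ 2 * rexp (-(2 * (v:ℝ))⁻¹ * y ^ 2)) :=
    ((integrable_sq_mul_exp_neg_mul_sq hb).add
      ((integrable_mul_exp_neg_mul_sq hb).const_mul _)).add
      ((integrable_exp_neg_mul_sq hb).const_mul _)
  exact (hint.comp_sub_right μ).const_mul _

lemma integral_gaussian_sub_sq (hv : v ≠ 0) (c : ℝ) :
    ∫ x, (x - c) ^ 2 ∂(gaussianReal μ v) = (v : ℝ) + (μ - c) ^ 2 := by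
  have hv' : (0:ℝ) < v := lt_of_le_of_ne v.coe_nonneg (by exact_mod_cast hv.symm)
  have hb : (0:ℝ) < (2 * (v:ℝ))⁻¹ := by positivity
  set b : ℝ := (2 * (v:ℝ))⁻¹ with hbdef
  rw [gaussian_integral_eq hv, gaussian_pdf_mul_sq_eq hv c]
  rw [integral_const_mul]
  have hshift : ∫ x : ℝ,
      ((x - μ) ^ 2 * rexp (-b * (x - μ) ^ 2) +
        2 * (μ - c) * ((x - μ) * rexp (-b * (x - μ) ^ 2)) +
        (μ - c) ^ 2 * rexp (-b * (x - μ) ^ 2)) =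
      ∫ y : ℝ, (y ^ 2 * rexp (-b * y ^ 2) +
        2 * (μ - c) * (y * rexp (-b * y ^ 2)) +
        (μ - c) ^ 2 * rexp (-b * y ^ 2)) := by
    exact integral_sub_right_eq_self (μ := volume)
      (fun y : ℝ => y ^ 2 * rexp (-b * y ^ 2) + 2 * (μ - c) * (y * rexp (-b * y ^ 2)) +
        (μ - c) ^ 2 * rexp (-b * y ^ 2)) μ
  rw [hshift]
  have h1 : Integrable (fun y : ℝ => y ^ 2 * rexp (-b * y ^ 2)) volume :=
    integrable_sq_mul_exp_neg_mul_sq hb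
  have h2 : Integrable (fun y : ℝ => 2 * (μ - c) * (y * rexp (-b * y ^ 2))) volume :=
    (integrable_mul_exp_neg_mul_sq hb).const_mul _
  have h3 : Integrable (fun y : ℝ => (μ - c) ^ 2 * rexp (-b * y ^ 2)) volume :=
    (integrable_exp_neg_mul_sq hb).const_mul _
  have h12 : Integrable (fun y : ℝ => y ^ 2 * rexp (-b * y ^ 2) +
      2 * (μ - c) * (y * rexp (-b * y ^ 2))) volume := h1.add h2
  rw [integral_add h12 h3, integral_add h1 h2,
    integral_const_mul, integral_const_mul,
    integral_sq_mul_exp_neg_mul_sq hb, integral_mul_exp_neg_mul_sq_real hb,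
    integral_gaussian]
  have hπb : π / b = 2 * π * (v:ℝ) := by
    rw [hbdef]; field_simp
  have hsqrt : (0:ℝ) < √(2 * π * (v:ℝ)) := by
    apply Real.sqrt_pos.2; positivity
  rw [hπb]
  rw [hbdef]
  field_simp
  ring

section KL


variable {f m : ℝ} {v w : ℝ≥0}

lemma gaussian_eq_withDensity_ratio (hv : v ≠ 0) (hw : w ≠ 0) :
    gaussianReal f v = (gaussianReal m w).withDensity
      (fun x => ENNReal.ofReal (gaussianPDFReal f v x / gaussianPDFReal m w x)) := by
  rw [gaussianReal_of_var_ne_zero _ hv, gaussianReal_of_var_ne_zero _ hw,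
    gaussianPDF_def, gaussianPDF_def,
    ← withDensity_mul _ (measurable_gaussianPDFReal m w).ennreal_ofReal
      (show Measurable (fun x => ENNReal.ofReal (gaussianPDFReal f v x / gaussianPDFReal m w x)) from
        ((measurable_gaussianPDFReal f v).div (measurable_gaussianPDFReal m w)).ennreal_ofReal)]
  congr 1
  funext x
  have hq : 0 < gaussianPDFReal m w x := gaussianPDFReal_pos m w x hw
  simp only [Pi.mul_apply]
  rw [← ENNReal.ofReal_mul hq.le, mul_comm (gaussianPDFReal m w x),
    div_mul_cancel₀ _ hq.ne']

lemma llr_gaussian_ae (hv : v ≠ 0) (hw : w ≠ 0) :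
    llr (gaussianReal f v) (gaussianReal m w) =ᵐ[gaussianReal f v]
      fun x => Real.log (gaussianPDFReal f v x) - Real.log (gaussianPDFReal m w x) := by
  have hac : gaussianReal f v ≪ gaussianReal m w :=
    (gaussianReal_absolutelyContinuous _ hv).trans
      (gaussianReal_absolutelyContinuous' m hw)
  have hR : Measurable (fun x =>
      ENNReal.ofReal (gaussianPDFReal f v x / gaussianPDFReal m w x)) :=
    ((measurable_gaussianPDFReal f v).div (measurable_gaussianPDFReal m w)).ennreal_ofReal
  have h := Measure.rnDeriv_withDensity (gaussianReal m w) hR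
  rw [← gaussian_eq_withDensity_ratio hv hw] at h
  have h' := h.filter_mono hac.ae_le
  filter_upwards [h'] with x hx
  have hp : 0 < gaussianPDFReal f v x := gaussianPDFReal_pos f v x hv
  have hq : 0 < gaussianPDFReal m w x := gaussianPDFReal_pos m w x hw
  simp only [llr_def, hx]
  rw [ENNReal.toReal_ofReal (div_nonneg hp.le hq.le), Real.log_div hp.ne' hq.ne']

lemma log_gaussianPDFReal (hv : v ≠ 0) (x : ℝ) :
    Real.log (gaussianPDFReal μ v x) =
      -(Real.log (2 * π * v)) / 2 - (x - μ) ^ 2 / (2 * v) := by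
  have hv' : (0:ℝ) < v := lt_of_le_of_ne v.coe_nonneg (by exact_mod_cast hv.symm)
  have h2πv : (0:ℝ) < 2 * π * v := by positivity
  rw [gaussianPDFReal, Real.log_mul (by positivity) (Real.exp_ne_zero _),
    Real.log_exp, Real.log_inv, Real.log_sqrt h2πv.le]
  ring

end KL

section KL2

variable {f m : ℝ} {v w : ℝ≥0}

lemma klDiv_gaussian (hv : v ≠ 0) (hw : w ≠ 0) :
    (klDiv (gaussianReal f v) (gaussianReal m w)).toReal =
      (Real.log (w:ℝ) - Real.log (v:ℝ)) / 2 - 1/2 + ((v:ℝ) + (f - m)^2) / (2 * (w:ℝ)) := by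
  have hv' : (0:ℝ) < v := lt_of_le_of_ne v.coe_nonneg (by exact_mod_cast hv.symm)
  have hw' : (0:ℝ) < w := lt_of_le_of_ne w.coe_nonneg (by exact_mod_cast hw.symm)
  set L' : ℝ → ℝ := fun x => (Real.log (w:ℝ) - Real.log (v:ℝ)) / 2
      - (x - f)^2 / (2*(v:ℝ)) + (x - m)^2 / (2*(w:ℝ)) with hL'def
  have hLL : (fun x => Real.log (gaussianPDFReal f v x) - Real.log (gaussianPDFReal m w x))
      = L' := by
    funext x
    rw [log_gaussianPDFReal hv, log_gaussianPDFReal hw, hL'def]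
    have h1 : Real.log (2 * π * (v:ℝ)) = Real.log (2 * π) + Real.log (v:ℝ) :=
      Real.log_mul (by positivity) hv'.ne'
    have h2 : Real.log (2 * π * (w:ℝ)) = Real.log (2 * π) + Real.log (w:ℝ) :=
      Real.log_mul (by positivity) hw'.ne'
    rw [h1, h2]
    ring
  have hae := llr_gaussian_ae (f := f) (m := m) hv hw
  rw [hLL] at hae
  have hquad1 : Integrable (fun x => (x - f)^2 / (2*(v:ℝ))) (gaussianReal f v) :=
    (integrable_gaussian_sub_sq hv f).div_const _
  have hquad2 : Integrable (fun x => (x - m)^2 / (2*(w:ℝ))) (gaussianReal f v) :=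
    (integrable_gaussian_sub_sq hv m).div_const _
  have hL' : Integrable L' (gaussianReal f v) :=
    ((integrable_const _).sub hquad1).add hquad2
  have hint : Integrable (llr (gaussianReal f v) (gaussianReal m w)) (gaussianReal f v) :=
    hL'.congr hae.symm
  have hac : gaussianReal f v ≪ gaussianReal m w :=
    (gaussianReal_absolutelyContinuous _ hv).trans
      (gaussianReal_absolutelyContinuous' m hw)
  have hI : ∫ x, llr (gaussianReal f v) (gaussianReal m w) x ∂(gaussianReal f v)
      = (Real.log (w:ℝ) - Real.log (v:ℝ)) / 2 - 1/2 + ((v:ℝ) + (f - m)^2) / (2 * (w:ℝ)) := by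
    rw [integral_congr_ae hae, hL'def]
    have hsub : Integrable (fun x => (Real.log (w:ℝ) - Real.log (v:ℝ)) / 2
        - (x - f)^2 / (2*(v:ℝ))) (gaussianReal f v) := (integrable_const _).sub hquad1
    rw [integral_add hsub hquad2, integral_sub (integrable_const _) hquad1,
      integral_const, integral_div, integral_div,
      integral_gaussian_sub_sq hv f, integral_gaussian_sub_sq hv m]
    simp only [measure_univ, ENNReal.toReal_one, probReal_univ, smul_eq_mul, one_mul, sub_self,
      ne_eq, OfNat.ofNat_ne_zero, not_false_eq_true, zero_pow, add_zero]
    field_simp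
  have hnonneg : 0 ≤ (Real.log (w:ℝ) - Real.log (v:ℝ)) / 2 - 1/2
      + ((v:ℝ) + (f - m)^2) / (2 * (w:ℝ)) := by
    have hlog : Real.log ((v:ℝ) / (w:ℝ)) ≤ (v:ℝ)/(w:ℝ) - 1 :=
      Real.log_le_sub_one_of_pos (by positivity)
    rw [Real.log_div hv'.ne' hw'.ne'] at hlog
    have hsplit : ((v:ℝ) + (f - m)^2) / (2 * (w:ℝ))
        = (v:ℝ)/(w:ℝ)/2 + (f - m)^2 / (2 * (w:ℝ)) := by
      field_simp
    have hd : 0 ≤ (f - m)^2 / (2 * (w:ℝ)) := by positivity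
    rw [hsplit]
    linarith
  unfold klDiv
  rw [if_pos ⟨hac, hint⟩, hI, ENNReal.toReal_ofReal hnonneg]

end KL2


/-- GP-UCB exploration term is dominated by the epistemic value: with
`β = (1/2) log (1 + 1/v)` and posterior variance `0 < v_t ≤ 1`, the squared
exploration bonus `β v_t` is bounded above by the mutual information between
the latent value and the noisy observation. -/
theorem ucb_exploration_le_mutual_information
    (m : ℝ) (v vt : ℝ≥0) (hv : 0 < v) (hvt : 0 < vt) (hvt1 : vt ≤ 1)
    (β : ℝ) (hβ : β = (1 / 2) * Real.log (1 + 1 / (v : ℝ))) :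
    β * (vt : ℝ) ≤
      ∫ f, (klDiv (gaussianReal f v) (gaussianReal m (vt + v))).toReal
        ∂(gaussianReal m vt) := by
  have hv0 : v ≠ 0 := hv.ne'
  have hvt0 : vt ≠ 0 := hvt.ne'
  have hw0 : vt + v ≠ 0 := by positivity
  have hv' : (0:ℝ) < v := by exact_mod_cast hv
  have hvt' : (0:ℝ) < vt := by exact_mod_cast hvt
  have hvt1' : (vt:ℝ) ≤ 1 := by exact_mod_cast hvt1
  have hw' : (0:ℝ) < ((vt + v : ℝ≥0) : ℝ) := by positivity
  set W : ℝ := ((vt + v : ℝ≥0) : ℝ) with hWdef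
  have hWeq : W = (vt:ℝ) + (v:ℝ) := by rw [hWdef]; push_cast; ring
  -- rewrite the integrand pointwise
  have hfun : (fun f => (klDiv (gaussianReal f v) (gaussianReal m (vt + v))).toReal)
      = fun f => ((Real.log W - Real.log (v:ℝ)) / 2 - 1/2 + (v:ℝ)/(2*W))
          + (f - m)^2 / (2*W) := by
    funext f
    rw [klDiv_gaussian hv0 hw0, ← hWdef, add_div]
    ring
  rw [hfun]
  have hquad : Integrable (fun f => (f - m)^2 / (2*W)) (gaussianReal m vt) :=
    (integrable_gaussian_sub_sq hvt0 m).div_const _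
  rw [integral_add (integrable_const _) hquad, integral_const, integral_div,
    integral_gaussian_sub_sq hvt0 m]
  simp only [measure_univ, ENNReal.toReal_one, probReal_univ, smul_eq_mul, one_mul, sub_self,
    ne_eq, OfNat.ofNat_ne_zero, not_false_eq_true, zero_pow, add_zero]
  -- the value is (log W - log v)/2
  have hval : (Real.log W - Real.log (v:ℝ)) / 2 - 1/2 + (v:ℝ)/(2*W) + (vt:ℝ)/(2*W)
      = (Real.log W - Real.log (v:ℝ)) / 2 := by
    have : (v:ℝ)/(2*W) + (vt:ℝ)/(2*W) = 1/2 := by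
      rw [hWeq]; field_simp; ring
    linarith
  rw [hval]
  -- Bernoulli inequality
  have hbern : (1 + 1/(v:ℝ)) ^ ((vt:ℝ)) ≤ 1 + (vt:ℝ) * (1/(v:ℝ)) :=
    rpow_one_add_le_one_add_mul_self (le_trans (by norm_num) (by positivity : (0:ℝ) ≤ 1/(v:ℝ))) hvt'.le hvt1'
  have hbase : (0:ℝ) < 1 + 1/(v:ℝ) := by positivity
  have hlogr : Real.log ((1 + 1/(v:ℝ)) ^ ((vt:ℝ))) = (vt:ℝ) * Real.log (1 + 1/(v:ℝ)) :=
    Real.log_rpow hbase _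
  have hmono : Real.log ((1 + 1/(v:ℝ)) ^ ((vt:ℝ))) ≤ Real.log (1 + (vt:ℝ) * (1/(v:ℝ))) :=
    Real.log_le_log (by positivity) hbern
  have hWv : 1 + (vt:ℝ) * (1/(v:ℝ)) = W / (v:ℝ) := by
    rw [hWeq]; field_simp; ring
  have hlogW : Real.log (1 + (vt:ℝ) * (1/(v:ℝ))) = Real.log W - Real.log (v:ℝ) := by
    rw [hWv, Real.log_div hw'.ne' hv'.ne']
  rw [hβ]
  rw [hlogr, hlogW] at hmono
  linarith
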